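/- If (X, Y) is pairwise completely positive, then |x_{i,j}|² ≤ y_{i,j} · y_{j,i} for all 1 ≤ i, j ≤ n. -/

import Mathlib

open Finset

/-- A pair of matrices `(X, Y)` is pairwise completely positive (PCP) if there exist
finite families of vectors `v k, w k : Fin n → ℂ` with
`X = Σ_k (v_k ⊙ w_k)(v_k ⊙ w_k)^*` and `Y = Σ_k (v_k ⊙ conj v_k)(w_k ⊙ conj w_k)^*`. -/
def IsPCP {n : ℕ} (X Y : Matrix (Fin n) (Fin n) ℂ) : Prop :=
  ∃ (m : ℕ) (v w : Fin m → Fin n → ℂ),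
    (∀ i j, X i j = ∑ k, (v k i * w k i) * star (v k j * w k j)) ∧
    (∀ i j, Y i j = ∑ k, (v k i * star (v k i)) * star (w k j * star (w k j)))

theorem pcp_abs_sq_le {n : ℕ} (X Y : Matrix (Fin n) (Fin n) ℂ) (h : IsPCP X Y) :
    ∀ i j, ‖X i j‖ ^ 2 ≤ (Y i j).re * (Y j i).re := by
  obtain ⟨m, v, w, hX, hY⟩ := h
  intro i j
  set a : Fin m → ℝ := fun k => ‖v k i‖ * ‖w k j‖ with ha
  set b : Fin m → ℝ := fun k => ‖v k j‖ * ‖w k i‖ with hb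
  have hYre : ∀ p q, (Y p q).re =
      ∑ k, (‖v k p‖ * ‖w k q‖) ^ 2 := by
    intro p q
    rw [hY p q]
    rw [Complex.re_sum]
    congr 1; funext k
    have h1 : v k p * star (v k p) = ((‖v k p‖)^2 : ℝ) := by
      simp [Complex.star_def, Complex.mul_conj, Complex.sq_norm]
    have h2 : star (w k q * star (w k q)) = ((‖w k q‖)^2 : ℝ) := by
      simp [Complex.star_def, Complex.mul_conj, Complex.sq_norm]
    rw [h1, h2, ← Complex.ofReal_mul, Complex.ofReal_re, mul_pow]
  have habs : ‖X i j‖ ≤ ∑ k, a k * b k := by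
    rw [hX i j]
    refine le_trans (norm_sum_le _ _) ?_
    apply Finset.sum_le_sum
    intro k _
    apply le_of_eq
    simp only [Complex.star_def, norm_mul, Complex.norm_conj, ha, hb]
    ring
  have hnn : 0 ≤ ∑ k, a k * b k := by
    apply Finset.sum_nonneg
    intro k _
    positivity
  calc ‖X i j‖ ^ 2 ≤ (∑ k, a k * b k) ^ 2 := by
        apply pow_le_pow_left₀ (norm_nonneg _) habs
    _ ≤ (∑ k, a k ^ 2) * (∑ k, b k ^ 2) := Finset.sum_mul_sq_le_sq_mul_sq _ _ _
    _ = (Y i j).re * (Y j i).re := by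
        rw [hYre i j, hYre j i]
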